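/- Let β be a satisfiable finite set of atomic comparisons over V and, for i = 1, …, k, let βᵢ be a finite nonempty set of closed semi-interval ACs of which at most one is an RSI (i.e., each member of βᵢ has the form x ≤ c, except possibly one member of the form x ≥ c). If β entails the disjunction ⋁ᵢ (⋀ βᵢ), then there exists i such that either (i) β entails every member of βᵢ, or (ii) there is exactly one e ∈ βᵢ such that β does not entail e, and β entails every member of βᵢ other than e. -/
import Mathlib


namespace QC

/-- A term is a variable in `V` or a real constant. -/
inductive Term (V : Type) where
  | var : V → Term V
  | const : ℝ → Term V

/-- The comparison relations `<, ≤, =, ≠`. -/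
inductive Rel where
  | lt | le | eq | ne

/-- A comparison between two terms.  (`x ≥ c` is represented as `c ≤ x`, etc.) -/
structure Comp (V : Type) where
  rel : Rel
  lhs : Term V
  rhs : Term V

def Term.eval {V : Type} (σ : V → ℝ) : Term V → ℝ
  | .var x => σ x
  | .const c => c

def Rel.holds : Rel → ℝ → ℝ → Prop
  | .lt => fun a b => a < b
  | .le => fun a b => a ≤ b
  | .eq => fun a b => a = b
  | .ne => fun a b => a ≠ b

/-- An assignment `σ : V → ℝ` satisfies a comparison. -/
def Comp.holds {V : Type} (a : Comp V) (σ : V → ℝ) : Prop :=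
  a.rel.holds (a.lhs.eval σ) (a.rhs.eval σ)

def Term.isVar {V : Type} : Term V → Prop
  | .var _ => True
  | .const _ => False

/-- An atomic comparison: at least one side is a variable. -/
def IsAC {V : Type} (a : Comp V) : Prop := a.lhs.isVar ∨ a.rhs.isVar

/-- `σ` satisfies every comparison in the finite set `F`. -/
def Sat {V : Type} (F : Finset (Comp V)) (σ : V → ℝ) : Prop := ∀ a ∈ F, a.holds σ

/-- A closed LSI comparison: `x ≤ c`. -/
def IsClosedLSI {V : Type} (a : Comp V) : Prop :=
  ∃ (x : V) (c : ℝ), a = ⟨Rel.le, Term.var x, Term.const c⟩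

/-- An open LSI comparison: `x < c`. -/
def IsOpenLSI {V : Type} (a : Comp V) : Prop :=
  ∃ (x : V) (c : ℝ), a = ⟨Rel.lt, Term.var x, Term.const c⟩

/-- A closed RSI comparison: `x ≥ c`, represented as `c ≤ x`. -/
def IsClosedRSI {V : Type} (a : Comp V) : Prop :=
  ∃ (x : V) (c : ℝ), a = ⟨Rel.le, Term.const c, Term.var x⟩

/-- An open RSI comparison: `x > c`, represented as `c < x`. -/
def IsOpenRSI {V : Type} (a : Comp V) : Prop :=
  ∃ (x : V) (c : ℝ), a = ⟨Rel.lt, Term.const c, Term.var x⟩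

/-- Proposition 7.1, RSI1 disjuncts: if a satisfiable `β` entails
`⋁ᵢ (⋀ βᵢ)` where each `βᵢ` consists of closed SI comparisons of which at most one
is an RSI, then for some `i` either `β` entails every member of `βᵢ`, or exactly one
member of `βᵢ` is not entailed and all others are. -/
theorem stmt9 {V : Type} (β : Finset (Comp V))
    (hAC : ∀ a ∈ β, IsAC a)
    (hsat : ∃ σ : V → ℝ, Sat β σ)
    (k : ℕ) (B : Fin k → Finset (Comp V))
    (hBne : ∀ i, (B i).Nonempty)
    (hSI : ∀ i, ∀ a ∈ B i, IsClosedLSI a ∨ IsClosedRSI a)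
    (hone : ∀ i, ∀ a ∈ B i, ∀ b ∈ B i, IsClosedRSI a → IsClosedRSI b → a = b)
    (hent : ∀ σ : V → ℝ, Sat β σ → ∃ i, ∀ a ∈ B i, a.holds σ) :
    ∃ i, (∀ e ∈ B i, ∀ σ : V → ℝ, Sat β σ → e.holds σ) ∨
      (∃ e ∈ B i, (¬ ∀ σ : V → ℝ, Sat β σ → e.holds σ) ∧
        ∀ e' ∈ B i, e' ≠ e → ∀ σ : V → ℝ, Sat β σ → e'.holds σ) := by
  by_contra hcon
  push_neg at hcon
  -- Step 1: for each i, find a non-entailed closed LSI member of B i.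
  have key : ∀ i : Fin k, ∃ (x : V) (c : ℝ),
      (⟨Rel.le, Term.var x, Term.const c⟩ : Comp V) ∈ B i ∧
      ∃ σ : V → ℝ, Sat β σ ∧ c < σ x := by
    intro i
    obtain ⟨⟨e₁, he₁, hw₁⟩, h2⟩ := hcon i
    obtain ⟨e₂, he₂, hne12, hw₂⟩ := h2 e₁ he₁ hw₁
    -- among e₁, e₂ at least one is a closed LSI
    have hLSI : ∃ e, e ∈ B i ∧ IsClosedLSI e ∧ ∃ σ, Sat β σ ∧ ¬ e.holds σ := by
      rcases hSI i e₁ he₁ with h1 | h1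
      · exact ⟨e₁, he₁, h1, hw₁⟩
      · rcases hSI i e₂ he₂ with h2' | h2'
        · exact ⟨e₂, he₂, h2', hw₂⟩
        · exact absurd (hone i e₂ he₂ e₁ he₁ h2' h1) hne12
    obtain ⟨e, he, ⟨x, c, rfl⟩, σ, hσ, hv⟩ := hLSI
    refine ⟨x, c, he, σ, hσ, ?_⟩
    simpa [Comp.holds, Rel.holds, Term.eval, not_le] using hv
  choose x c hmem σw hσw hviol using key
  -- Step 2: handle k = 0
  obtain ⟨σinit, hσinit⟩ := hsat
  rcases Nat.eq_zero_or_pos k with hk | hk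
  · subst hk
    obtain ⟨i, -⟩ := hent σinit hσinit
    exact i.elim0
  have hkne : Nonempty (Fin k) := ⟨⟨0, hk⟩⟩
  have hune : (Finset.univ : Finset (Fin k)).Nonempty := Finset.univ_nonempty
  set i₀ : Fin k := ⟨0, hk⟩ with hi₀
  -- Step 3: the pointwise max of witnesses
  set σM : V → ℝ := fun v => Finset.univ.sup' hune (fun i => σw i v) with hσM
  set σ₀ : V → ℝ := σw i₀ with hσ₀def
  have hub : ∀ (u : Term V) (i : Fin k), Term.eval (σw i) u ≤ Term.eval σM u := by
    intro u i
    cases u with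
    | var v => exact Finset.le_sup' (fun j => σw j v) (Finset.mem_univ i)
    | const r => exact le_refl r
  have hatt : ∀ u : Term V, ∃ i, Term.eval σM u = Term.eval (σw i) u := by
    intro u
    cases u with
    | var v =>
      obtain ⟨j, -, hj⟩ := Finset.exists_mem_eq_sup' hune (fun i => σw i v)
      exact ⟨j, hj⟩
    | const r => exact ⟨i₀, rfl⟩
  -- σM satisfies the non-≠ order facts of β
  have hMle : ∀ a ∈ β, ∀ i : Fin k, Term.eval (σw i) a.lhs ≤ Term.eval (σw i) a.rhs →
      True := fun _ _ _ _ => trivial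
  have hMxc : ∀ i : Fin k, c i < σM (x i) := by
    intro i
    have h1 := hub (Term.var (x i)) i
    simp only [Term.eval] at h1
    exact lt_of_lt_of_le (hviol i) h1
  -- Step 4: choose a small good t
  set δ : ℝ := Finset.univ.inf' hune (fun i => (σM (x i) - c i) / (|σ₀ (x i) - σM (x i)| + 1))
    with hδdef
  have hδpos : 0 < δ := by
    rw [hδdef, Finset.lt_inf'_iff]
    intro i _
    apply div_pos
    · linarith [hMxc i]
    · positivity
  set bad : Comp V → ℝ := fun a =>
      (Term.eval σM a.lhs - Term.eval σM a.rhs) /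
      ((Term.eval σM a.lhs - Term.eval σM a.rhs) - (Term.eval σ₀ a.lhs - Term.eval σ₀ a.rhs))
    with hbaddef
  have hm : (0 : ℝ) < min δ 1 := lt_min hδpos one_pos
  have hinf : (Set.Ioo (0:ℝ) (min δ 1)).Infinite := Set.Ioo_infinite hm
  obtain ⟨t, htIoo, htbad⟩ := (hinf.diff (β.image bad).finite_toSet).nonempty
  obtain ⟨ht0, htm⟩ := htIoo
  have htδ : t < δ := lt_of_lt_of_le htm (min_le_left _ _)
  have ht1 : t < 1 := lt_of_lt_of_le htm (min_le_right _ _)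
  -- Step 5: the perturbed assignment
  set τ : V → ℝ := fun v => (1 - t) * σM v + t * σ₀ v with hτdef
  have hevalτ : ∀ u : Term V,
      Term.eval τ u = (1 - t) * Term.eval σM u + t * Term.eval σ₀ u := by
    intro u
    cases u with
    | var v => rfl
    | const r => show r = (1-t)*r + t*r; ring
  have hSatτ : Sat β τ := by
    intro a ha
    have h0 : a.holds σ₀ := hσw i₀ a ha
    have hall : ∀ i : Fin k, a.holds (σw i) := fun i => hσw i a ha
    obtain ⟨r, l, rh⟩ := a
    cases r with
    | le =>
      simp only [Comp.holds, Rel.holds] at h0 hall ⊢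
      obtain ⟨j, hj⟩ := hatt l
      have hM : Term.eval σM l ≤ Term.eval σM rh := by
        calc Term.eval σM l = Term.eval (σw j) l := hj
          _ ≤ Term.eval (σw j) rh := hall j
          _ ≤ Term.eval σM rh := hub rh j
      rw [hevalτ, hevalτ]
      nlinarith
    | lt =>
      simp only [Comp.holds, Rel.holds] at h0 hall ⊢
      obtain ⟨j, hj⟩ := hatt l
      have hM : Term.eval σM l < Term.eval σM rh := by
        calc Term.eval σM l = Term.eval (σw j) l := hj
          _ < Term.eval (σw j) rh := hall j
          _ ≤ Term.eval σM rh := hub rh j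
      rw [hevalτ, hevalτ]
      nlinarith
    | eq =>
      simp only [Comp.holds, Rel.holds] at h0 hall ⊢
      have hM : Term.eval σM l = Term.eval σM rh := by
        obtain ⟨j, hj⟩ := hatt l
        obtain ⟨j', hj'⟩ := hatt rh
        apply le_antisymm
        · calc Term.eval σM l = Term.eval (σw j) l := hj
            _ = Term.eval (σw j) rh := hall j
            _ ≤ Term.eval σM rh := hub rh j
        · calc Term.eval σM rh = Term.eval (σw j') rh := hj'
            _ = Term.eval (σw j') l := (hall j').symm
            _ ≤ Term.eval σM l := hub l j'
      rw [hevalτ, hevalτ, hM, h0]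
    | ne =>
      simp only [Comp.holds, Rel.holds] at h0 hall ⊢
      rw [hevalτ, hevalτ]
      intro heq
      set A : ℝ := Term.eval σM l - Term.eval σM rh with hA
      set D : ℝ := Term.eval σ₀ l - Term.eval σ₀ rh with hD
      have hD0 : D ≠ 0 := sub_ne_zero.mpr h0
      have hlin : (1 - t) * A + t * D = 0 := by rw [hA, hD]; ring_nf; linarith [heq]
      by_cases hAD : A = D
      · apply hD0
        rw [hAD] at hlin
        linarith [hlin]
      · have hADne : A - D ≠ 0 := sub_ne_zero.mpr hAD
        have htval : t = bad ⟨Rel.ne, l, rh⟩ := by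
          rw [hbaddef]
          simp only
          rw [← hA, ← hD, eq_div_iff hADne]
          linarith [hlin]
        apply htbad
        rw [Finset.coe_image]
        exact ⟨⟨Rel.ne, l, rh⟩, ha, htval.symm⟩
  -- Step 6: τ violates every B i
  obtain ⟨i, hi⟩ := hent τ hSatτ
  have hm' := hi _ (hmem i)
  simp only [Comp.holds, Rel.holds, Term.eval] at hm'
  -- hm' : τ (x i) ≤ c i, but τ (x i) > c i
  have habs : c i < τ (x i) := by
    have h1 : c i < σM (x i) := hMxc i
    have h2 : t < (σM (x i) - c i) / (|σ₀ (x i) - σM (x i)| + 1) := by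
      refine lt_of_lt_of_le htδ ?_
      exact Finset.inf'_le _ (Finset.mem_univ i)
    have hden : (0:ℝ) < |σ₀ (x i) - σM (x i)| + 1 := by positivity
    have h3 : t * (|σ₀ (x i) - σM (x i)| + 1) < σM (x i) - c i :=
      (lt_div_iff₀ hden).mp h2
    have h4 : -|σ₀ (x i) - σM (x i)| ≤ σ₀ (x i) - σM (x i) := neg_abs_le _
    show c i < (1 - t) * σM (x i) + t * σ₀ (x i)
    nlinarith [abs_nonneg (σ₀ (x i) - σM (x i))]
  exact absurd hm' (not_le.mpr habs)

end QC
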